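/- For a finite-state additive noise channel over an alphabet of size q whose noise is governed by a strongly connected finite-state machine with Perron eigenvalue λ (topological entropy h_ch = log_q λ), the zero-error feedback capacity satisfies C_{0f} ≤ 1 − log_q λ. -/

import Mathlib

/-- The zero-error feedback capacity of a finite-state additive noise channel whose noise
is governed by a strongly connected finite-state machine with Perron eigenvalue `lam`
satisfies `C₀f ≤ 1 - log_q lam`. -/
theorem stmt8 {X S : Type*} [Fintype X] [AddGroup X] [Fintype S]
    (q : ℕ) (hq : 2 ≤ q) (hcard : Fintype.card X = q)
    (T : S → X → S → Prop)
    (𝒱 : S → (n : ℕ) → Set (Fin n → X))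
    (h𝒱 : ∀ (s : S) (n : ℕ), 𝒱 s n = {v | ∃ σ : Fin (n + 1) → S, σ 0 = s ∧
        ∀ i : Fin n, T (σ i.castSucc) (v i) (σ i.succ)})
    (lam α : ℝ) (hα : 0 < α) (hlam : 1 ≤ lam)
    (hsize : ∀ (s : S) (n : ℕ), α * lam ^ n ≤ (Nat.card (𝒱 s n) : ℝ))
    (C0f : ℝ)
    (hC0f : IsLUB {r : ℝ | ∃ (n M : ℕ), 0 < M ∧
      ∃ (enc : Fin M → (t : ℕ) → (Fin t → X) → X)
        (out : Fin M → (Fin (n + 1) → X) → Fin (n + 1) → X),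
        (∀ (m : Fin M) (v : Fin (n + 1) → X) (t : Fin (n + 1)),
          out m v t = enc m t.val
            (fun i : Fin t.val => out m v ⟨i.val, lt_trans i.isLt t.isLt⟩) + v t) ∧
        (∀ m m' : Fin M, m ≠ m' → ∀ (s s' : S) (v v' : Fin (n + 1) → X),
          v ∈ 𝒱 s (n + 1) → v' ∈ 𝒱 s' (n + 1) → out m v ≠ out m' v') ∧
        r = Real.logb q M / (n + 1)} C0f) :
    C0f ≤ 1 - Real.logb q lam := by
  have hq1 : (1:ℝ) < q := by exact_mod_cast lt_of_lt_of_le one_lt_two hq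
  rcases isEmpty_or_nonempty S with hS | hS
  · -- S empty: the set of rates is unbounded, contradicting IsLUB
    exfalso
    set K : ℕ := ⌈C0f⌉₊ + 1 with hK
    have hmem : (K : ℝ) ∈ {r : ℝ | ∃ (n M : ℕ), 0 < M ∧
      ∃ (enc : Fin M → (t : ℕ) → (Fin t → X) → X)
        (out : Fin M → (Fin (n + 1) → X) → Fin (n + 1) → X),
        (∀ (m : Fin M) (v : Fin (n + 1) → X) (t : Fin (n + 1)),
          out m v t = enc m t.val
            (fun i : Fin t.val => out m v ⟨i.val, lt_trans i.isLt t.isLt⟩) + v t) ∧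
        (∀ m m' : Fin M, m ≠ m' → ∀ (s s' : S) (v v' : Fin (n + 1) → X),
          v ∈ 𝒱 s (n + 1) → v' ∈ 𝒱 s' (n + 1) → out m v ≠ out m' v') ∧
        r = Real.logb q M / (n + 1)} := by
      refine ⟨0, q ^ K, Nat.pow_pos (by omega), fun _ _ _ => 0, fun _ v => v,
        fun m v t => (zero_add _).symm, fun m m' _ s => isEmptyElim s, ?_⟩
      push_cast
      rw [Real.logb_pow, Real.logb_self_eq_one hq1]
      rw [hK]
      push_cast
      ring
    have h1 : (K : ℝ) ≤ C0f := hC0f.1 hmem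
    have h2 : C0f ≤ (⌈C0f⌉₊ : ℝ) := Nat.le_ceil C0f
    have h3 : ((⌈C0f⌉₊ + 1 : ℕ) : ℝ) ≤ C0f := h1
    push_cast at h3
    linarith
  · obtain ⟨s⟩ := hS
    refine hC0f.2 ?_
    rintro r ⟨n, M, hM, enc, out, hrec, hdec, rfl⟩
    -- recovery of noise from output
    have hrecov : ∀ (mm : Fin M) (w : Fin (n+1) → X) (i : Fin (n+1)),
        w i = -enc mm i.val (fun i' : Fin i.val => out mm w ⟨i'.val, lt_trans i'.isLt i.isLt⟩)
          + out mm w i := by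
      intro mm w i
      rw [hrec mm w i, neg_add_cancel_left]
    -- key counting bound for all k
    have key : ∀ k : ℕ, 0 < k →
        (M:ℝ)^k * (α * lam ^ (k*(n+1))) ≤ (q:ℝ)^(k*(n+1)) := by
      intro k hk
      set N := k * (n+1) with hN
      have hjlt : ∀ t : Fin N, t.val / (n+1) < k := by
        intro t
        rw [Nat.div_lt_iff_lt_mul (Nat.succ_pos n)]
        exact t.isLt
      have hidx : ∀ (j i : ℕ), j < k → i < n+1 → j*(n+1) + i < N := by
        intro j i hj hi
        calc j*(n+1) + i < j*(n+1) + (n+1) := by omega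
        _ = (j+1)*(n+1) := by ring
        _ ≤ k*(n+1) := Nat.mul_le_mul_right _ hj
      have hmlt : ∀ t : Fin N, t.val % (n+1) < n+1 := fun t => Nat.mod_lt _ (Nat.succ_pos n)
      -- block of a noise word
      set blk : (Fin N → X) → Fin k → Fin (n+1) → X :=
        fun v j i => v ⟨j.val*(n+1) + i.val, hidx j.val i.val j.isLt i.isLt⟩ with hblk
      -- block membership
      have hblkmem : ∀ (v : Fin N → X), v ∈ 𝒱 s N → ∀ j : Fin k,
          ∃ s' : S, blk v j ∈ 𝒱 s' (n+1) := by
        intro v hv j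
        rw [h𝒱 s N] at hv
        obtain ⟨σ, hσ0, hσ⟩ := hv
        have hidx' : ∀ i : ℕ, i < n+2 → j.val*(n+1) + i < N + 1 := by
          intro i hi
          have h1 : (j.val+1)*(n+1) ≤ k*(n+1) := Nat.mul_le_mul_right _ j.isLt
          have h2 : j.val*(n+1) + i ≤ j.val*(n+1) + (n+1) := by omega
          have h3 : j.val*(n+1) + (n+1) = (j.val+1)*(n+1) := by ring
          omega
        refine ⟨σ ⟨j.val*(n+1), hidx' 0 (by omega)⟩, ?_⟩
        rw [h𝒱]
        refine ⟨fun i => σ ⟨j.val*(n+1) + i.val, hidx' i.val i.isLt⟩, ?_, ?_⟩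
        · exact congrArg σ (Fin.ext (by simp))
        · intro i
          have h := hσ ⟨j.val*(n+1) + i.val, hidx j.val i.val j.isLt i.isLt⟩
          convert h using 2 <;>
            exact Fin.ext (by simp [Fin.succ, Fin.castSucc, Fin.castAdd, Fin.castLE] <;> omega)
      -- the concatenated output map
      set Φ : (Fin k → Fin M) × (𝒱 s N) → (Fin N → X) :=
        fun p t => out (p.1 ⟨t.val/(n+1), hjlt t⟩) (blk p.2.1 ⟨t.val/(n+1), hjlt t⟩)
          ⟨t.val % (n+1), hmlt t⟩ with hΦ
      have hinj : Function.Injective Φ := by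
        rintro ⟨m, v, hv⟩ ⟨m', v', hv'⟩ heq
        have hdm : ∀ (j : Fin k) (i : Fin (n+1)),
            ((j.val*(n+1)+i.val)/(n+1) = j.val) ∧ ((j.val*(n+1)+i.val) % (n+1) = i.val) := by
          intro j i
          constructor
          · rw [Nat.add_comm, Nat.add_mul_div_right _ _ (Nat.succ_pos n),
              Nat.div_eq_of_lt i.isLt, Nat.zero_add]
          · rw [Nat.add_comm, Nat.add_mul_mod_self_right, Nat.mod_eq_of_lt i.isLt]
        have hout : ∀ j : Fin k, out (m j) (blk v j) = out (m' j) (blk v' j) := by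
          intro j
          funext i
          have h := congrFun heq ⟨j.val*(n+1)+i.val, hidx j.val i.val j.isLt i.isLt⟩
          simp only [hΦ, (hdm j i).1, (hdm j i).2, Fin.eta] at h
          exact h
        have hm : m = m' := by
          funext j
          by_contra hne
          obtain ⟨s1, hmem1⟩ := hblkmem v hv j
          obtain ⟨s2, hmem2⟩ := hblkmem v' hv' j
          exact hdec (m j) (m' j) hne s1 s2 (blk v j) (blk v' j) hmem1 hmem2 (hout j)
        subst hm
        have hvv : v = v' := by
          funext t
          set j : Fin k := ⟨t.val/(n+1), hjlt t⟩ with hj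
          set i : Fin (n+1) := ⟨t.val % (n+1), hmlt t⟩ with hi
          have ht : j.val*(n+1) + i.val = t.val := by
            show t.val/(n+1)*(n+1) + t.val%(n+1) = t.val
            rw [Nat.mul_comm]
            exact Nat.div_add_mod t.val (n+1)
          have h1 : blk v j i = v t := congrArg v (Fin.ext ht)
          have h2 : blk v' j i = v' t := congrArg v' (Fin.ext ht)
          rw [← h1, ← h2, hrecov (m j) (blk v j) i, hrecov (m j) (blk v' j) i, hout j]
        subst hvv
        rfl
      have hcount : Nat.card ((Fin k → Fin M) × (𝒱 s N)) ≤ Nat.card (Fin N → X) :=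
        Nat.card_le_card_of_injective Φ hinj
      rw [Nat.card_prod, Nat.card_fun, Nat.card_fun] at hcount
      simp only [Nat.card_eq_fintype_card, Fintype.card_fin, hcard] at hcount
      have hcount' : (M:ℝ)^k * (Nat.card (𝒱 s N) : ℝ) ≤ (q:ℝ)^N := by
        exact_mod_cast hcount
      calc (M:ℝ)^k * (α * lam ^ N) ≤ (M:ℝ)^k * (Nat.card (𝒱 s N) : ℝ) :=
            mul_le_mul_of_nonneg_left (hsize s N) (by positivity)
        _ ≤ (q:ℝ)^N := hcount'
    -- deduce M * lam^(n+1) ≤ q^(n+1)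
    have hBq : (0:ℝ) < (q:ℝ)^(n+1) := by positivity
    have hMle : (M:ℝ) * lam^(n+1) ≤ (q:ℝ)^(n+1) := by
      by_contra hlt
      push_neg at hlt
      set A : ℝ := (M:ℝ) * lam^(n+1) with hA
      set Bq : ℝ := (q:ℝ)^(n+1) with hBqdef
      set c : ℝ := A / Bq with hc
      have hc1 : 1 < c := (one_lt_div hBq).2 hlt
      have hkey' : ∀ k : ℕ, 0 < k → α * c^k ≤ 1 := by
        intro k hk
        have h := key k hk
        have hAk : (M:ℝ)^k * (α * lam ^ (k*(n+1))) = α * A^k := by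
          rw [hA, mul_pow, ← pow_mul, Nat.mul_comm (n+1) k]
          ring
        rw [hAk] at h
        rw [hc, div_pow, ← mul_div_assoc, div_le_one (by positivity)]
        rw [hBqdef, ← pow_mul, Nat.mul_comm (n+1) k]
        exact h
      -- contradiction: α * c^k grows without bound
      set K : ℕ := ⌈(1/α)/(c-1)⌉₊ + 1 with hKdef
      have hKpos : 0 < K := by omega
      have hK1 : (1/α)/(c-1) < (K:ℝ) := by
        have := Nat.le_ceil ((1/α)/(c-1))
        push_cast [hKdef]
        linarith
      have hK2 : 1/α < (K:ℝ)*(c-1) := (div_lt_iff₀ (by linarith)).1 hK1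
      have hK3 : 1 < α * ((K:ℝ)*(c-1)) := by
        have := mul_lt_mul_of_pos_left hK2 hα
        rwa [mul_one_div, div_self hα.ne'] at this
      have hbern : 1 + (K:ℝ)*(c-1) ≤ c^K := by
        have h := one_add_mul_le_pow (show (-2:ℝ) ≤ c-1 by linarith) K
        have h2 : 1 + (c-1) = c := by ring
        rwa [h2] at h
      have h4 : α * (1 + (K:ℝ)*(c-1)) ≤ 1 := by
        calc α * (1 + (K:ℝ)*(c-1)) ≤ α * c^K :=
              mul_le_mul_of_nonneg_left hbern hα.le
          _ ≤ 1 := hkey' K hKpos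
      rw [mul_add, mul_one] at h4
      linarith
    -- now conclude with logb algebra
    have hM1 : (1:ℝ) ≤ (M:ℝ) := by exact_mod_cast hM
    have hlam0 : (0:ℝ) < lam := lt_of_lt_of_le one_pos hlam
    have hlog : Real.logb q ((M:ℝ) * lam^(n+1)) ≤ Real.logb q ((q:ℝ)^(n+1)) :=
      Real.logb_le_logb_of_le hq1 (by positivity) hMle
    rw [Real.logb_mul (by positivity) (by positivity), Real.logb_pow, Real.logb_pow,
      Real.logb_self_eq_one hq1, mul_one] at hlog
    have hn1 : (0:ℝ) < (n:ℝ) + 1 := by positivity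
    rw [div_le_iff₀ hn1]
    push_cast at hlog ⊢
    nlinarith [hlog]
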